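/- Let (Ω, P) be a probability space and let X : Fin 2 × Fin 2 → Fin N → Ω → ℝ be a mutually independent family of random variables, each taking values in {−1, 1}, such that for each (i,j) all N variables X (i,j) k have common mean μ(i,j). Let S = μ(0,0) + μ(1,0) + μ(0,1) − μ(1,1) and let S̄ be the random variable S̄ = m(0,0) + m(1,0) + m(0,1) − m(1,1), where m(i,j) = (1/N) ∑ₖ X (i,j) k. Then the variance of S̄ satisfies Var[S̄] ≤ (4 − S²/4)/N. -/

import Mathlib

open MeasureTheory ProbabilityTheory Finset

noncomputable section

/-- Empirical mean `m(i,j) = (1/N) ∑ₖ X (i,j) k`. -/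
def empMean {Ω : Type*} {N : ℕ} (X : Fin 2 × Fin 2 → Fin N → Ω → ℝ)
    (ij : Fin 2 × Fin 2) (ω : Ω) : ℝ :=
  (1 / N) * ∑ k, X ij k ω

/-- Empirical CHSH estimate `S̄ = m(0,0) + m(1,0) + m(0,1) − m(1,1)`. -/
def SbarEmp {Ω : Type*} {N : ℕ} (X : Fin 2 × Fin 2 → Fin N → Ω → ℝ) (ω : Ω) : ℝ :=
  empMean X (0, 0) ω + empMean X (1, 0) ω + empMean X (0, 1) ω - empMean X (1, 1) ω

/-- True CHSH value `S = μ(0,0) + μ(1,0) + μ(0,1) − μ(1,1)`. -/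
def Strue (μ : Fin 2 × Fin 2 → ℝ) : ℝ := μ (0, 0) + μ (1, 0) + μ (0, 1) - μ (1, 1)

end

/-- Variance bound for the empirical CHSH estimate: for a mutually independent family of
±1-valued random variables with common mean `μ(i,j)` in each group,
`Var[S̄] ≤ (4 − S²/4)/N`. -/
theorem variance_of_chsh_estimate {Ω : Type*} [MeasurableSpace Ω]
    (P : Measure Ω) [IsProbabilityMeasure P] (N : ℕ) (hN : 0 < N)
    (X : Fin 2 × Fin 2 → Fin N → Ω → ℝ)
    (hmeas : ∀ ij k, Measurable (X ij k))
    (hindep : iIndepFun (m := fun _ : (Fin 2 × Fin 2) × Fin N => (inferInstance : MeasurableSpace ℝ))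
      (fun p => X p.1 p.2) P)
    (hval : ∀ ij k ω, X ij k ω = 1 ∨ X ij k ω = -1)
    (μ : Fin 2 × Fin 2 → ℝ)
    (hmean : ∀ ij k, ∫ ω, X ij k ω ∂P = μ ij) :
    variance (SbarEmp X) P ≤ (4 - (Strue μ) ^ 2 / 4) / N := by
  classical
  set c : Fin 2 × Fin 2 → ℝ := fun ij => if ij = (1,1) then -1 else 1 with hc
  set Y : (Fin 2 × Fin 2) × Fin N → Ω → ℝ :=
    fun p => (fun x => (c p.1 / N) * x) ∘ (fun ω => X p.1 p.2 ω) with hY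
  have hNR : (0:ℝ) < N := by exact_mod_cast hN
  -- Memℒp for each X
  have hmem : ∀ ij k, MemLp (X ij k) 2 P := by
    intro ij k
    refine (memLp_top_of_bound (hmeas ij k).aestronglyMeasurable 1
      (Filter.Eventually.of_forall fun ω => ?_)).mono_exponent le_top
    rcases hval ij k ω with h | h <;> rw [h] <;> norm_num
  have hmemY : ∀ p : (Fin 2 × Fin 2) × Fin N, MemLp (Y p) 2 P := by
    intro p
    exact (hmem p.1 p.2).const_mul _
  -- S̄ is the sum of the Y's
  have hsum : SbarEmp X = ∑ p : (Fin 2 × Fin 2) × Fin N, Y p := by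
    funext ω
    rw [Finset.sum_apply]
    have : ∑ p : (Fin 2 × Fin 2) × Fin N, Y p ω
        = ∑ ij : Fin 2 × Fin 2, c ij * ((1 / N) * ∑ k, X ij k ω) := by
      rw [Fintype.sum_prod_type]
      refine Finset.sum_congr rfl fun ij _ => ?_
      rw [Finset.mul_sum, Finset.mul_sum]
      refine Finset.sum_congr rfl fun k _ => ?_
      simp [hY]; ring
    rw [this, Fintype.sum_prod_type]
    simp only [Fin.sum_univ_two]
    simp only [hc, SbarEmp, empMean]
    norm_num
    ring
  -- independence of the Y's
  have hindepY : iIndepFun (m := fun _ => (inferInstance : MeasurableSpace ℝ)) Y P :=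
    hindep.comp (fun p x => (c p.1 / N) * x) (fun p => measurable_const_mul _)
  -- variance of each X is 1 - μ²
  have hvarX : ∀ ij k, variance (X ij k) P = 1 - μ ij ^ 2 := by
    intro ij k
    rw [variance_eq_sub (hmem ij k)]
    have h2 : (fun ω => X ij k ω ^ 2) = fun _ => (1:ℝ) := by
      funext ω; rcases hval ij k ω with h | h <;> rw [h] <;> norm_num
    have : P[(X ij k) ^ 2] = 1 := by
      show ∫ ω, X ij k ω ^ 2 ∂P = 1
      rw [h2]; simp
    rw [this, hmean]
  have hvarY : ∀ p : (Fin 2 × Fin 2) × Fin N,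
      variance (Y p) P = (1 / N^2) * (1 - μ p.1 ^ 2) := by
    intro p
    have := variance_const_mul (c p.1 / N) (X p.1 p.2) P
    simp only [hY, Function.comp_def]
    rw [this, hvarX]
    have hcsq : c p.1 ^ 2 = 1 := by
      by_cases h : p.1 = (1,1) <;> simp [hc, h]
    rw [div_pow, hcsq]
  -- compute the variance of S̄
  have hvar : variance (SbarEmp X) P
      = (4 - (μ (0,0) ^ 2 + μ (1,0) ^ 2 + μ (0,1) ^ 2 + μ (1,1) ^ 2)) / N := by
    rw [hsum, IndepFun.variance_sum (fun p _ => hmemY p)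
      (fun p _ q _ hpq => hindepY.indepFun hpq)]
    have h1 : ∑ p : (Fin 2 × Fin 2) × Fin N, variance (Y p) P
        = ∑ ij : Fin 2 × Fin 2, (N : ℝ) * ((1 / N^2) * (1 - μ ij ^ 2)) := by
      rw [Fintype.sum_prod_type]
      refine Finset.sum_congr rfl fun ij _ => ?_
      rw [Finset.sum_congr rfl fun k _ => hvarY (ij, k)]
      simp
    rw [h1, Fintype.sum_prod_type]
    simp only [Fin.sum_univ_two]
    field_simp
    ring
  rw [hvar, Strue]
  gcongr
  nlinarith [sq_nonneg (μ (0,0) - μ (1,0)), sq_nonneg (μ (0,0) - μ (0,1)), sq_nonneg (μ (0,0) + μ (1,1)), sq_nonneg (μ (1,0) - μ (0,1)), sq_nonneg (μ (1,0) + μ (1,1)), sq_nonneg (μ (0,1) + μ (1,1))]
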